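/- Let (Ω, F, P) be a probability space and Y₁, Y₂ : Ω → ℝ be square-integrable random variables with laws μ₁ and μ₂ respectively. Then ∫_ℝ |μ̂₁(y) − μ̂₂(y)|² e^{−y²} dy ≤ π · E[(Y₁ − Y₂)²]. -/

import Mathlib

open MeasureTheory Complex
open Filter

/-- The characteristic function (Fourier transform) of a measure `μ` on `ℝ`:
`μ̂(y) = ∫ e^{-ixy} μ(dx)`. -/
noncomputable def charFun (μ : Measure ℝ) (y : ℝ) : ℂ :=
  ∫ x, Complex.exp (-(Complex.I * x * y)) ∂μ

lemma aux_norm_exp_mul_I_sub_one_le (x : ℝ) : ‖Complex.exp (x * I) - 1‖ ≤ |x| := by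
  have hpyth := Real.sin_sq_add_cos_sq (x / 2)
  have hcos : Real.cos x = 2 * Real.cos (x / 2) ^ 2 - 1 := by
    have := Real.cos_two_mul (x / 2)
    rw [show 2 * (x / 2) = x by ring] at this
    linarith
  have habs : Real.sin (x / 2) ^ 2 ≤ (x / 2) ^ 2 := by
    have h := Real.abs_sin_le_abs (x := x / 2)
    nlinarith [abs_nonneg (x / 2), abs_nonneg (Real.sin (x / 2)), _root_.sq_abs (x / 2),
      _root_.sq_abs (Real.sin (x / 2))]
  have h2 : ‖Complex.exp (↑x * I) - 1‖ ^ 2 ≤ x ^ 2 := by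
    rw [Complex.sq_norm, Complex.normSq_apply]
    simp only [Complex.sub_re, Complex.sub_im, Complex.exp_ofReal_mul_I_re,
      Complex.exp_ofReal_mul_I_im, Complex.one_re, Complex.one_im]
    nlinarith [Real.sin_sq_add_cos_sq x]
  calc ‖Complex.exp (↑x * I) - 1‖ = Real.sqrt (‖Complex.exp (↑x * I) - 1‖ ^ 2) :=
        (Real.sqrt_sq (norm_nonneg _)).symm
    _ ≤ Real.sqrt (x ^ 2) := Real.sqrt_le_sqrt h2
    _ = |x| := Real.sqrt_sq_eq_abs x

lemma aux_norm_exp_sub_exp (a b y : ℝ) :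
    ‖Complex.exp (-(Complex.I * a * y)) - Complex.exp (-(Complex.I * b * y))‖
      ≤ |a - b| * |y| := by
  have h : Complex.exp (-(Complex.I * a * y)) - Complex.exp (-(Complex.I * b * y))
      = Complex.exp (-(Complex.I * b * y)) * (Complex.exp ((((b - a) * y : ℝ)) * I) - 1) := by
    rw [mul_sub, ← Complex.exp_add, mul_one]
    push_cast
    ring_nf
  rw [h, norm_mul]
  have h1 : ‖Complex.exp (-(Complex.I * b * y))‖ = 1 := by
    rw [show -(Complex.I * (b : ℂ) * (y : ℂ)) = ((-(b * y) : ℝ)) * I by push_cast; ring,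
      Complex.norm_exp_ofReal_mul_I]
  rw [h1, one_mul]
  calc ‖Complex.exp ((((b - a) * y : ℝ)) * I) - 1‖ ≤ |(b - a) * y| :=
        aux_norm_exp_mul_I_sub_one_le _
    _ = |a - b| * |y| := by rw [abs_mul, abs_sub_comm]

/-- For square-integrable real random variables `Y₁, Y₂` with laws `μ₁, μ₂`:
`∫ |μ̂₁(y) − μ̂₂(y)|² e^{−y²} dy ≤ π · E[(Y₁ − Y₂)²]`. -/
theorem integral_sq_norm_charFun_sub_le
    {Ω : Type*} [MeasurableSpace Ω] (P : Measure Ω) [IsProbabilityMeasure P]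
    (Y₁ Y₂ : Ω → ℝ) (hY₁ : MemLp Y₁ 2 P) (hY₂ : MemLp Y₂ 2 P)
    (μ₁ μ₂ : Measure ℝ) (hμ₁ : μ₁ = P.map Y₁) (hμ₂ : μ₂ = P.map Y₂) :
    ∫ y : ℝ, ‖_root_.charFun μ₁ y - _root_.charFun μ₂ y‖ ^ 2 * Real.exp (-y ^ 2)
      ≤ Real.pi * ∫ ω, (Y₁ ω - Y₂ ω) ^ 2 ∂P := by
  subst hμ₁ hμ₂
  have hZ : MemLp (fun ω => Y₁ ω - Y₂ ω) 2 P := hY₁.sub hY₂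
  have hZint : Integrable (fun ω => Y₁ ω - Y₂ ω) P := hZ.integrable one_le_two
  set A := ∫ ω, |Y₁ ω - Y₂ ω| ∂P with hAdef
  set B := ∫ ω, (Y₁ ω - Y₂ ω) ^ 2 ∂P with hBdef
  have hA0 : 0 ≤ A := integral_nonneg fun ω => abs_nonneg _
  have hB0 : 0 ≤ B := integral_nonneg fun ω => sq_nonneg _
  -- Cauchy–Schwarz : A ^ 2 ≤ B
  have hCS : A ^ 2 ≤ B := by
    have hpq : Real.HolderConjugate 2 2 := Real.HolderConjugate.two_two
    have hf : MemLp (fun ω => Y₁ ω - Y₂ ω) (ENNReal.ofReal 2) P := by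
      rwa [show ENNReal.ofReal 2 = 2 by norm_num]
    have hg : MemLp (fun _ : Ω => (1 : ℝ)) (ENNReal.ofReal 2) P := memLp_const 1
    have h := integral_mul_norm_le_Lp_mul_Lq hpq hf hg
    simp only [norm_one, mul_one, integral_const, measure_univ, probReal_univ, ENNReal.toReal_one,
      smul_eq_mul, one_mul, one_pow, Real.one_rpow, Real.norm_eq_abs, Real.rpow_two, _root_.sq_abs] at h
    -- h : ∫ |Z| ≤ (∫ Z ^ 2) ^ (1 / 2 : ℝ)
    have hA' : A ≤ B ^ ((1 : ℝ) / 2) := by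
      refine le_trans (le_of_eq hAdef) (le_trans h (le_of_eq ?_))
      rw [hBdef]
    have hrp : (B ^ ((1 : ℝ) / 2)) ^ (2 : ℕ) = B := by
      rw [← Real.rpow_natCast (B ^ ((1 : ℝ) / 2)) 2, ← Real.rpow_mul hB0]
      norm_num
    calc A ^ 2 ≤ (B ^ ((1 : ℝ) / 2)) ^ 2 := pow_le_pow_left₀ hA0 hA' 2
      _ = B := hrp
  -- pointwise bound on the characteristic function difference
  have hkey : ∀ y : ℝ, ‖_root_.charFun (P.map Y₁) y - _root_.charFun (P.map Y₂) y‖ ≤ |y| * A := by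
    intro y
    have hm₁ : AEMeasurable Y₁ P := hY₁.aestronglyMeasurable.aemeasurable
    have hm₂ : AEMeasurable Y₂ P := hY₂.aestronglyMeasurable.aemeasurable
    have hnorm1 : ∀ (x : ℝ), ‖Complex.exp (-(Complex.I * x * y))‖ = 1 := by
      intro x
      rw [show -(Complex.I * (x : ℂ) * (y : ℂ)) = ((-(x * y) : ℝ)) * I by push_cast; ring,
        Complex.norm_exp_ofReal_mul_I]
    have hcont : Continuous (fun x : ℝ => Complex.exp (-(Complex.I * x * y))) := by
      continuity
    have hc : ∀ (Y : Ω → ℝ), AEMeasurable Y P →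
        _root_.charFun (P.map Y) y = ∫ ω, Complex.exp (-(Complex.I * Y ω * y)) ∂P := by
      intro Y hm
      rw [_root_.charFun, integral_map hm hcont.aestronglyMeasurable]
    have hint : ∀ (Y : Ω → ℝ), AEMeasurable Y P →
        Integrable (fun ω => Complex.exp (-(Complex.I * Y ω * y))) P := by
      intro Y hm
      refine Integrable.mono' (integrable_const (1 : ℝ))
        (hcont.aestronglyMeasurable.comp_aemeasurable hm)
        (Eventually.of_forall fun ω => le_of_eq (hnorm1 (Y ω)))
    rw [hc Y₁ hm₁, hc Y₂ hm₂, ← integral_sub (hint Y₁ hm₁) (hint Y₂ hm₂)]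
    refine (norm_integral_le_integral_norm _).trans ?_
    have hptw : ∀ ω, ‖Complex.exp (-(Complex.I * Y₁ ω * y)) - Complex.exp (-(Complex.I * Y₂ ω * y))‖
        ≤ |y| * |Y₁ ω - Y₂ ω| := by
      intro ω
      refine (aux_norm_exp_sub_exp (Y₁ ω) (Y₂ ω) y).trans_eq (mul_comm _ _)
    calc ∫ ω, ‖Complex.exp (-(Complex.I * Y₁ ω * y)) - Complex.exp (-(Complex.I * Y₂ ω * y))‖ ∂P
        ≤ ∫ ω, |y| * |Y₁ ω - Y₂ ω| ∂P := by
          refine integral_mono_of_nonneg (Eventually.of_forall fun ω => norm_nonneg _)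
            (hZint.abs.const_mul |y|) (Eventually.of_forall hptw)
      _ = |y| * A := by rw [hAdef, integral_const_mul]
  -- pointwise bound for the full integrand
  have hpt : ∀ y : ℝ, ‖_root_.charFun (P.map Y₁) y - _root_.charFun (P.map Y₂) y‖ ^ 2 * Real.exp (-y ^ 2)
      ≤ (B * (2 / Real.exp 1)) * Real.exp (-(1 / 2) * y ^ 2) := by
    intro y
    have h1 : ‖_root_.charFun (P.map Y₁) y - _root_.charFun (P.map Y₂) y‖ ^ 2 ≤ y ^ 2 * B := by
      have h2 : ‖_root_.charFun (P.map Y₁) y - _root_.charFun (P.map Y₂) y‖ ^ 2 ≤ (|y| * A) ^ 2 :=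
        pow_le_pow_left₀ (norm_nonneg _) (hkey y) 2
      calc ‖_root_.charFun (P.map Y₁) y - _root_.charFun (P.map Y₂) y‖ ^ 2 ≤ (|y| * A) ^ 2 := h2
        _ = y ^ 2 * A ^ 2 := by rw [mul_pow, _root_.sq_abs]
        _ ≤ y ^ 2 * B := mul_le_mul_of_nonneg_left hCS (sq_nonneg y)
    have hexp : y ^ 2 * Real.exp (-y ^ 2) ≤ (2 / Real.exp 1) * Real.exp (-(1 / 2) * y ^ 2) := by
      have h4 : y ^ 2 / 2 ≤ Real.exp (y ^ 2 / 2) / Real.exp 1 := by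
        rw [← Real.exp_sub]
        have := Real.add_one_le_exp (y ^ 2 / 2 - 1)
        linarith
      have hepos := Real.exp_pos (y ^ 2 / 2)
      have h5 : Real.exp (-(1 / 2) * y ^ 2) = (Real.exp (y ^ 2 / 2))⁻¹ := by
        rw [← Real.exp_neg]; ring_nf
      have h3 : y ^ 2 * Real.exp (-(1 / 2) * y ^ 2) ≤ 2 / Real.exp 1 := by
        rw [h5]
        have h6 : y ^ 2 ≤ 2 * (Real.exp (y ^ 2 / 2) / Real.exp 1) := by linarith
        calc y ^ 2 * (Real.exp (y ^ 2 / 2))⁻¹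
            ≤ (2 * (Real.exp (y ^ 2 / 2) / Real.exp 1)) * (Real.exp (y ^ 2 / 2))⁻¹ :=
              mul_le_mul_of_nonneg_right h6 (inv_nonneg.2 hepos.le)
          _ = 2 / Real.exp 1 := by field_simp
      have h7 : Real.exp (-y ^ 2) = Real.exp (-(1 / 2) * y ^ 2) * Real.exp (-(1 / 2) * y ^ 2) := by
        rw [← Real.exp_add]; ring_nf
      rw [h7, ← mul_assoc]
      exact mul_le_mul_of_nonneg_right h3 (Real.exp_pos _).le
    calc ‖_root_.charFun (P.map Y₁) y - _root_.charFun (P.map Y₂) y‖ ^ 2 * Real.exp (-y ^ 2)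
        ≤ (y ^ 2 * B) * Real.exp (-y ^ 2) :=
          mul_le_mul_of_nonneg_right h1 (Real.exp_pos _).le
      _ = B * (y ^ 2 * Real.exp (-y ^ 2)) := by ring
      _ ≤ B * ((2 / Real.exp 1) * Real.exp (-(1 / 2) * y ^ 2)) :=
          mul_le_mul_of_nonneg_left hexp hB0
      _ = (B * (2 / Real.exp 1)) * Real.exp (-(1 / 2) * y ^ 2) := by ring
  have hgint : Integrable (fun y : ℝ => (B * (2 / Real.exp 1)) * Real.exp (-(1 / 2) * y ^ 2)) :=
    (integrable_exp_neg_mul_sq (by norm_num : (0 : ℝ) < 1 / 2)).const_mul _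
  have he2 : (2 : ℝ) ≤ Real.exp 1 := by
    have := Real.add_one_le_exp 1; linarith
  have h2e : 2 / Real.exp 1 ≤ 1 := (div_le_one (Real.exp_pos 1)).2 he2
  have hsq : Real.sqrt (Real.pi / (1 / 2)) ≤ Real.pi := by
    rw [show Real.pi / (1 / 2) = 2 * Real.pi by ring]
    have h8 : (2 : ℝ) * Real.pi ≤ Real.pi ^ 2 := by nlinarith [Real.pi_gt_three]
    calc Real.sqrt (2 * Real.pi) ≤ Real.sqrt (Real.pi ^ 2) := Real.sqrt_le_sqrt h8
      _ = Real.pi := Real.sqrt_sq Real.pi_pos.le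
  calc ∫ y : ℝ, ‖_root_.charFun (P.map Y₁) y - _root_.charFun (P.map Y₂) y‖ ^ 2 * Real.exp (-y ^ 2)
      ≤ ∫ y : ℝ, (B * (2 / Real.exp 1)) * Real.exp (-(1 / 2) * y ^ 2) := by
        refine integral_mono_of_nonneg
          (Eventually.of_forall fun y => mul_nonneg (by positivity) (Real.exp_pos _).le)
          hgint (Eventually.of_forall hpt)
    _ = (B * (2 / Real.exp 1)) * ∫ y : ℝ, Real.exp (-(1 / 2) * y ^ 2) := integral_const_mul _ _
    _ = (B * (2 / Real.exp 1)) * Real.sqrt (Real.pi / (1 / 2)) := by rw [integral_gaussian]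
    _ ≤ Real.pi * B := by
      have s0 : 0 ≤ Real.sqrt (Real.pi / (1 / 2)) := Real.sqrt_nonneg _
      calc (B * (2 / Real.exp 1)) * Real.sqrt (Real.pi / (1 / 2))
          ≤ (B * 1) * Real.sqrt (Real.pi / (1 / 2)) :=
            mul_le_mul_of_nonneg_right (mul_le_mul_of_nonneg_left h2e hB0) s0
        _ = B * Real.sqrt (Real.pi / (1 / 2)) := by ring
        _ ≤ B * Real.pi := mul_le_mul_of_nonneg_left hsq hB0
        _ = Real.pi * B := mul_comm _ _
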